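/- Let G be a finite connected graph. Then the following three statements are equivalent: (1) G has a perfect 2-matching; (2) for every subset S of V(G), the number of isolated vertices of G − S is at most |S|; (3) G has a spanning subgraph each of whose connected components is isomorphic to K_2 or to an odd cycle C_{2t+1} for some t ≥ 1. -/

import Mathlib

/-- A perfect `2`-matching of a simple graph `G` is an assignment `f` of weights in `{0, 1, 2}`
to the edges of `G` (non-edges get weight `0`) such that for every vertex `v`, the sum of the
weights of the edges incident with `v` equals `2`. -/
def SimpleGraph.IsPerfectTwoMatching {V : Type*} (G : SimpleGraph V)
    (f : Sym2 V → ℕ) : Prop :=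
  (∀ e, f e ≠ 0 → e ∈ G.edgeSet) ∧ (∀ e, f e ≤ 2) ∧
    ∀ v : V, ∑ᶠ e ∈ G.incidenceSet v, f e = 2

/-- `i(G - S)`: the number of isolated vertices of the subgraph of `G` induced on the
complement of `S`, i.e. the number of vertices outside `S` all of whose neighbours lie in `S`. -/
noncomputable def SimpleGraph.isoCount {V : Type*} (G : SimpleGraph V) (S : Set V) : ℕ :=
  Nat.card {v : V // v ∉ S ∧ ∀ w, G.Adj v w → w ∈ S}

/-- A `{K₂, C_{2t+1} | t ≥ 1}`-factor of `G`: a spanning subgraph `H ≤ G` each of whose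
connected components is isomorphic to `K₂` or to an odd cycle `C_{2t+1}` with `t ≥ 1`. -/
def SimpleGraph.HasK2OddCycleFactor {V : Type*} (G : SimpleGraph V) : Prop :=
  ∃ H : SimpleGraph V, H ≤ G ∧
    ∀ c : H.ConnectedComponent,
      Nonempty (H.induce c.supp ≃g completeGraph (Fin 2)) ∨
        ∃ t : ℕ, 1 ≤ t ∧ Nonempty (H.induce c.supp ≃g SimpleGraph.cycleGraph (2 * t + 1))


open Finset SimpleGraph Equiv Equiv.Perm

namespace TutteAux
variable {V : Type*} [Fintype V] [DecidableEq V]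

section Perm
variable (m : Equiv.Perm V)

open scoped Classical in
/-- length of the `m`-cycle through `v` -/
noncomputable def clen (v : V) : ℕ := ((m.cycleOf v).support).card

open scoped Classical in
lemma clen_two_le {m : Equiv.Perm V} (hm : ∀ v, m v ≠ v) (v : V) : 2 ≤ clen m v :=
  (Equiv.Perm.isCycle_cycleOf m (hm v)).two_le_card_support

open scoped Classical in
lemma pow_mod_clen (v : V) (n : ℕ) : (m ^ (n % clen m v)) v = (m ^ n) v :=
  Equiv.Perm.pow_mod_card_support_cycleOf_self_apply m n v

open scoped Classical in
lemma clen_eq_of_sameCycle {m : Equiv.Perm V} {u v : V} (h : m.SameCycle u v) :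
    clen m u = clen m v := by
  unfold clen; rw [h.cycleOf_eq]

lemma sameCycle_pow (v : V) (n : ℕ) : m.SameCycle v ((m ^ n) v) :=
  ⟨n, by rw [zpow_natCast]⟩

open scoped Classical in
lemma pow_clen_inj {m : Equiv.Perm V} (hm : ∀ v, m v ≠ v) (v : V) {i j : ℕ}
    (hi : i < clen m v) (hj : j < clen m v) (hij : (m ^ i) v = (m ^ j) v) : i = j := by
  wlog hle : i ≤ j generalizing i j
  · exact (this hj hi hij.symm (by omega)).symm
  by_contra hne
  set d := j - i with hd
  have hdpos : 0 < d := by omega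
  have hdlt : d < clen m v := by omega
  have hmd : (m ^ d) v = v := by
    have h0 : (m ^ i) ((m ^ d) v) = (m ^ j) v := by
      rw [← Equiv.Perm.mul_apply, ← pow_add, Nat.add_sub_cancel' hle]
    exact Equiv.injective (m ^ i) (by rw [h0, ← hij])
  have hone : m.cycleOf v ^ d = 1 := by
    ext x
    by_cases hx : m.SameCycle v x
    · obtain ⟨z, hz⟩ := hx
      set c := m.cycleOf v with hcdef
      have h1 : (c ^ z) v = x := by rw [hcdef, Equiv.Perm.cycleOf_zpow_apply_self, hz]
      have : (c ^ d) x = x := by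
        calc (c ^ d) x = (c ^ (d : ℤ)) x := by rw [zpow_natCast]
          _ = (c ^ ((d : ℤ) + z)) v := by rw [← h1, ← Equiv.Perm.mul_apply, ← zpow_add]
          _ = (m ^ ((d : ℤ) + z)) v := by rw [hcdef, Equiv.Perm.cycleOf_zpow_apply_self]
          _ = (m ^ (z : ℤ)) ((m ^ (d : ℤ)) v) := by rw [add_comm, zpow_add, Equiv.Perm.mul_apply]
          _ = (m ^ (z : ℤ)) v := by rw [zpow_natCast, hmd]
          _ = x := hz
      simpa using this
    · have hfix : m.cycleOf v x = x := by
        rw [Equiv.Perm.cycleOf_apply, if_neg hx]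
      simp [Equiv.Perm.pow_apply_eq_self_of_apply_eq_self hfix]
  have horder : orderOf (m.cycleOf v) = clen m v :=
    (Equiv.Perm.isCycle_cycleOf m (hm v)).orderOf
  have := orderOf_dvd_of_pow_eq_one hone
  rw [horder] at this
  exact absurd (Nat.le_of_dvd hdpos this) (by omega)

open scoped Classical in
lemma exists_pow_lt_clen {m : Equiv.Perm V} (hm : ∀ v, m v ≠ v) {u v : V}
    (h : m.SameCycle u v) : ∃ i < clen m u, (m ^ i) u = v := by
  obtain ⟨i, -, hi⟩ := h.exists_pow_eq'
  have hpos : 0 < clen m u := by have := clen_two_le hm u; omega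
  exact ⟨i % clen m u, Nat.mod_lt _ hpos, by rw [pow_mod_clen]; exact hi⟩

end Perm

set_option linter.unusedSectionVars false

lemma cyc_adj {k : ℕ} (hk : 2 ≤ k) (i j : Fin k) :
    (SimpleGraph.cycleGraph k).Adj i j ↔
      (j.1 = (i.1 + 1) % k ∨ i.1 = (j.1 + 1) % k) := by
  obtain ⟨n, rfl⟩ : ∃ n, k = n + 2 := ⟨k - 2, by omega⟩
  rw [SimpleGraph.cycleGraph_adj]
  have hval : ∀ a b : Fin (n + 2), a - b = 1 ↔ a.1 = (b.1 + 1) % (n + 2) := by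
    intro a b
    rw [sub_eq_iff_eq_add, Fin.ext_iff]
    simp [Fin.add_def, Nat.add_comm]
  rw [hval, hval]
  tauto

open scoped Classical in
lemma iso_K2 {V : Type*} (H : SimpleGraph V) {x y : V} (hxy : x ≠ y) (hadj : H.Adj x y) :
    Nonempty (H.induce {x, y} ≃g completeGraph (Fin 2)) := by
  have hyx : ¬ (y = x) := fun h => hxy h.symm
  have hcg : ∀ p q : Fin 2, (completeGraph (Fin 2)).Adj p q ↔ p ≠ q := fun p q => Iff.rfl
  have hind : ∀ (a b : V) (ha : a ∈ ({x, y} : Set V)) (hb : b ∈ ({x, y} : Set V)),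
      (H.induce {x, y}).Adj ⟨a, ha⟩ ⟨b, hb⟩ ↔ H.Adj a b := fun _ _ _ _ => Iff.rfl
  refine ⟨⟨⟨fun p => if p.1 = x then 0 else 1,
      fun i => if i = 0 then ⟨x, Or.inl rfl⟩ else ⟨y, Or.inr rfl⟩, ?_, ?_⟩, ?_⟩⟩
  · rintro ⟨p, hp | hp⟩ <;> subst hp
    · simp
    · simp [hyx]
  · intro i
    fin_cases i
    · simp
    · simp [hyx]
  · rintro ⟨a, ha⟩ ⟨b, hb⟩
    have ha' : a = x ∨ a = y := ha
    have hb' : b = x ∨ b = y := hb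
    rcases ha' with rfl | rfl <;> rcases hb' with rfl | rfl
    · rw [hcg, hind]
      simp only [Equiv.coe_fn_mk, if_pos rfl]
      exact ⟨fun h => absurd rfl h, fun h => absurd h (H.irrefl)⟩
    · rw [hcg, hind]
      simp only [Equiv.coe_fn_mk, if_pos rfl, if_neg hyx]
      exact ⟨fun _ => hadj, fun _ => by decide⟩
    · rw [hcg, hind]
      simp only [Equiv.coe_fn_mk, if_pos rfl, if_neg hyx]
      exact ⟨fun _ => hadj.symm, fun _ => by decide⟩
    · rw [hcg, hind]
      simp only [Equiv.coe_fn_mk, if_neg hyx]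
      exact ⟨fun h => absurd rfl h, fun h => absurd h (H.irrefl)⟩

lemma reachable_closed {V : Type*} {H : SimpleGraph V} {P : V → Prop}
    (hP : ∀ a b, H.Adj a b → P a → P b) {u w : V} (h : H.Reachable u w) (hu : P u) : P w := by
  obtain ⟨p⟩ := h
  induction p with
  | nil => exact hu
  | cons hadj p ih => exact ih (hP _ _ hadj hu)

open Finset in
open scoped Classical in
lemma exists_perm {V : Type*} [Fintype V] (G : SimpleGraph V)
    (h2 : ∀ S : Set V, G.isoCount S ≤ S.ncard) :
    ∃ m : Equiv.Perm V, ∀ v, G.Adj v (m v) := by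
  have hall : ∀ A : Finset V, A.card ≤ (A.biUnion (fun v => G.neighborFinset v)).card := by
    intro A
    set N := A.biUnion (fun v => G.neighborFinset v) with hN
    set A2 := A \ N with hA2
    set S := A2.biUnion (fun v => G.neighborFinset v) with hS
    have hmemS : ∀ w, w ∈ S ↔ ∃ u ∈ A2, G.Adj u w := by
      intro w
      simp [hS, Finset.mem_biUnion, SimpleGraph.mem_neighborFinset]
    have hmemN : ∀ w, w ∈ N ↔ ∃ u ∈ A, G.Adj u w := by
      intro w
      simp [hN, Finset.mem_biUnion, SimpleGraph.mem_neighborFinset]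
    have hiso : ∀ v ∈ A2, v ∉ (↑S : Set V) ∧ ∀ w, G.Adj v w → w ∈ (↑S : Set V) := by
      intro v hv
      constructor
      · intro hvS
        obtain ⟨u, hu, hadj⟩ := (hmemS v).mp hvS
        have : v ∈ N := (hmemN v).mpr ⟨u, Finset.mem_sdiff.mp hu |>.1, hadj⟩
        exact (Finset.mem_sdiff.mp hv).2 this
      · intro w hw
        exact Finset.mem_coe.mpr ((hmemS w).mpr ⟨v, hv, hw⟩)
    have h1 : A2.card ≤ S.card := by
      have hsub : A2 ⊆ univ.filter
          (fun v => v ∉ (↑S : Set V) ∧ ∀ w, G.Adj v w → w ∈ (↑S : Set V)) := by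
        intro v hv
        exact Finset.mem_filter.mpr ⟨Finset.mem_univ v, hiso v hv⟩
      calc A2.card ≤ _ := Finset.card_le_card hsub
        _ = G.isoCount ↑S := by
            rw [SimpleGraph.isoCount, Nat.card_eq_fintype_card, Fintype.card_subtype]
        _ ≤ (↑S : Set V).ncard := h2 ↑S
        _ = S.card := Set.ncard_coe_finset S
    have hSsub : S ⊆ N \ A := by
      intro w hw
      obtain ⟨u, hu, hadj⟩ := (hmemS w).mp hw
      obtain ⟨huA, huN⟩ := Finset.mem_sdiff.mp hu
      refine Finset.mem_sdiff.mpr ⟨(hmemN w).mpr ⟨u, huA, hadj⟩, fun hwA => ?_⟩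
      exact huN ((hmemN u).mpr ⟨w, hwA, hadj.symm⟩)
    have hcard1 : A2.card + (A ∩ N).card = A.card := Finset.card_sdiff_add_card_inter A N
    have hcard2 : (N \ A).card + (N ∩ A).card = N.card := Finset.card_sdiff_add_card_inter N A
    have h3 : S.card ≤ (N \ A).card := Finset.card_le_card hSsub
    have h4 : (A ∩ N).card = (N ∩ A).card := by rw [Finset.inter_comm]
    omega
  obtain ⟨f, hfinj, hf⟩ := (Finset.all_card_le_biUnion_card_iff_exists_injective
    (fun v => G.neighborFinset v)).mp hall
  refine ⟨Equiv.ofBijective f ((Finite.injective_iff_bijective).mp hfinj), fun v => ?_⟩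
  exact (G.mem_neighborFinset v (f v)).mp (hf v)

open scoped Classical in
lemma finsum_incidenceSet (G : SimpleGraph V) (f : Sym2 V → ℕ) (v : V) :
    ∑ᶠ e ∈ G.incidenceSet v, f e = ∑ w ∈ G.neighborFinset v, f s(v, w) := by
  have himg : G.incidenceSet v = (fun w => s(v, w)) '' (G.neighborSet v) := by
    ext e
    constructor
    · rintro ⟨he, hv⟩
      induction e with
      | h x y =>
        rcases Sym2.mem_iff.mp hv with rfl | rfl
        · exact ⟨y, (G.mem_edgeSet).mp he, rfl⟩
        · exact ⟨x, ((G.mem_edgeSet).mp he).symm, Sym2.eq_swap⟩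
    · rintro ⟨w, hw, rfl⟩
      exact ⟨(G.mem_edgeSet).mpr hw, Sym2.mem_mk_left v w⟩
  rw [himg, finsum_mem_image (fun a _ b _ h => (Sym2.congr_right).mp h),
    ← finsum_mem_coe_finset, SimpleGraph.coe_neighborFinset]

open scoped Classical in
lemma one_two (G : SimpleGraph V) (f : Sym2 V → ℕ) (hf : G.IsPerfectTwoMatching f)
    (S : Set V) : G.isoCount S ≤ S.ncard := by
  obtain ⟨hsupp, hle, hsum⟩ := hf
  have hsum' : ∀ v, ∑ w ∈ G.neighborFinset v, f s(v, w) = 2 := fun v => by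
    rw [← finsum_incidenceSet]; exact hsum v
  set I : Finset V := univ.filter (fun v => v ∉ S ∧ ∀ w, G.Adj v w → w ∈ S) with hI
  have hcount : G.isoCount S = I.card := by
    rw [SimpleGraph.isoCount, Nat.card_eq_fintype_card, Fintype.card_subtype]
  have hncard : S.ncard = S.toFinset.card := Set.ncard_eq_toFinset_card' S
  set T : Finset (V × V) := (I ×ˢ univ).filter (fun p => G.Adj p.1 p.2) with hT
  set T' : Finset (V × V) := (S.toFinset ×ˢ univ).filter (fun p => G.Adj p.1 p.2) with hT'
  have hsub : T.image Prod.swap ⊆ T' := by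
    intro p hp
    simp only [Finset.mem_image] at hp
    obtain ⟨q, hq, rfl⟩ := hp
    simp only [hT, Finset.mem_filter, Finset.mem_product, hI, Finset.mem_filter] at hq
    obtain ⟨⟨⟨-, hqI⟩, -⟩, hadj⟩ := hq
    simp only [hT', Finset.mem_filter, Finset.mem_product]
    exact ⟨⟨Set.mem_toFinset.mpr (hqI.2 _ hadj), Finset.mem_univ _⟩, hadj.symm⟩
  have key : ∀ J : Finset V, ∑ v ∈ J, ∑ w ∈ G.neighborFinset v, f s(v, w)
      = ∑ p ∈ (J ×ˢ univ).filter (fun p => G.Adj p.1 p.2), f s(p.1, p.2) := by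
    intro J
    rw [Finset.sum_filter, Finset.sum_product]
    refine Finset.sum_congr rfl fun v _ => ?_
    rw [← Finset.sum_filter]
    refine Finset.sum_congr ?_ fun _ _ => rfl
    ext w
    simp [SimpleGraph.mem_neighborFinset]
  have h1 : 2 * I.card = ∑ p ∈ T, f s(p.1, p.2) := by
    rw [← key I]
    simp [hsum', mul_comm]
  have h2 : ∑ p ∈ T', f s(p.1, p.2) = 2 * S.toFinset.card := by
    rw [← key S.toFinset]
    simp [hsum', mul_comm]
  have h3 : ∑ p ∈ T, f s(p.1, p.2) = ∑ p ∈ T.image Prod.swap, f s(p.1, p.2) := by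
    rw [Finset.sum_image (fun x _ y _ h => Prod.swap_injective h)]
    exact Finset.sum_congr rfl fun p _ => by rw [Sym2.eq_swap]; rfl
  have h4 : ∑ p ∈ T.image Prod.swap, f s(p.1, p.2) ≤ ∑ p ∈ T', f s(p.1, p.2) :=
    Finset.sum_le_sum_of_subset hsub
  omega

lemma cyc_nbr {k : ℕ} (hk : 3 ≤ k) (j : Fin k) :
    ∃ a b : Fin k, a ≠ b ∧ (SimpleGraph.cycleGraph k).neighborSet j = {a, b} := by
  obtain ⟨n, rfl⟩ : ∃ n, k = n + 3 := ⟨k - 3, by omega⟩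
  refine ⟨j - 1, j + 1, fun h => ?_, by
    have := SimpleGraph.cycleGraph_neighborSet (n := n + 1) (v := j)
    convert this using 2⟩
  have h3 : j = j + (1 + 1) := by
    rw [← add_assoc]; exact sub_eq_iff_eq_add.mp h
  have h2 : (1 + 1 : Fin (n + 3)) = 0 := left_eq_add.mp h3
  have h4 := congrArg Fin.val h2
  have h5 : (1 + 1 : Fin (n + 3)).val = 2 := rfl
  have h6 : (0 : Fin (n + 3)).val = 0 := rfl
  rw [h5, h6] at h4
  omega

open scoped Classical in
lemma sum_nbr_eq (G H : SimpleGraph V) (hHG : H ≤ G) (f : Sym2 V → ℕ)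
    (hf0 : ∀ e, e ∉ H.edgeSet → f e = 0) (v : V) :
    ∑ w ∈ G.neighborFinset v, f s(v, w) = ∑ w ∈ H.neighborFinset v, f s(v, w) := by
  refine (Finset.sum_subset (fun w hw => ?_) (fun w _ hw => ?_)).symm
  · exact (G.mem_neighborFinset v w).mpr (hHG ((H.mem_neighborFinset v w).mp hw))
  · exact hf0 _ (fun hc => hw ((H.mem_neighborFinset v w).mpr ((H.mem_edgeSet).mp hc)))

open scoped Classical in
lemma three_one (G : SimpleGraph V) (h : G.HasK2OddCycleFactor) :
    ∃ f, G.IsPerfectTwoMatching f := by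
  obtain ⟨H, hHG, hcomp⟩ := h
  set K2 : V → Prop :=
    fun v => Nonempty (H.induce (H.connectedComponentMk v).supp ≃g completeGraph (Fin 2))
    with hK2def
  set f : Sym2 V → ℕ :=
    fun e => if e ∈ H.edgeSet then (if ∀ v ∈ e, K2 v then 2 else 1) else 0 with hfdef
  have hf0 : ∀ e, e ∉ H.edgeSet → f e = 0 := fun e he => by simp [hfdef, he]
  have hfval : ∀ v w, H.Adj v w → f s(v, w) = if K2 v then 2 else 1 := by
    intro v w hvw
    have hcc := SimpleGraph.ConnectedComponent.connectedComponentMk_eq_of_adj hvw.symm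
    have hK2w : K2 w ↔ K2 v := by simp only [hK2def]; rw [hcc]
    have : (∀ u ∈ s(v, w), K2 u) ↔ K2 v := by
      constructor
      · exact fun hall => hall v (Sym2.mem_mk_left v w)
      · intro hv u hu
        rcases Sym2.mem_iff.mp hu with rfl | rfl
        · exact hv
        · exact hK2w.mpr hv
    simp only [hfdef, (H.mem_edgeSet).mpr hvw, if_true, this]
  refine ⟨f, fun e he => ?_, fun e => ?_, fun v => ?_⟩
  · by_cases hH : e ∈ H.edgeSet
    · exact SimpleGraph.edgeSet_mono hHG hH
    · exact absurd (hf0 e hH) he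
  · simp only [hfdef]; split_ifs <;> omega
  · rw [finsum_incidenceSet, sum_nbr_eq G H hHG f hf0 v]
    set c := H.connectedComponentMk v with hc
    have hv : v ∈ c.supp := rfl
    rcases hcomp c with hl | ⟨t, ht, hr⟩
    · -- K2 component
      obtain ⟨φ⟩ := hl
      have hK2v : K2 v := ⟨φ⟩
      set x : ↥c.supp := ⟨v, hv⟩ with hx
      set y : ↥c.supp := φ.symm (φ x + 1) with hy
      have hfin2 : ∀ a : Fin 2, a ≠ a + 1 := by decide
      have hfin2' : ∀ a b : Fin 2, a ≠ b → b = a + 1 := by decide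
      have hadjxy : (H.induce c.supp).Adj x y := by
        rw [← φ.map_adj_iff, hy, RelIso.apply_symm_apply]
        exact hfin2 (φ x)
      have hvy : H.Adj v y.1 := hadjxy
      have hNv : H.neighborFinset v = {y.1} := by
        ext u
        rw [H.mem_neighborFinset, Finset.mem_singleton]
        constructor
        · intro hu
          have husupp : u ∈ c.supp := by
            rw [SimpleGraph.ConnectedComponent.mem_supp_iff, hc,
              SimpleGraph.ConnectedComponent.connectedComponentMk_eq_of_adj hu.symm]
          have hadjxu : (H.induce c.supp).Adj x ⟨u, husupp⟩ := hu
          rw [← φ.map_adj_iff] at hadjxu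
          have : φ ⟨u, husupp⟩ = φ x + 1 := hfin2' _ _ (SimpleGraph.ne_of_adj _ hadjxu)
          have : (⟨u, husupp⟩ : ↥c.supp) = y := by
            rw [hy, ← this, RelIso.symm_apply_apply]
          exact congrArg Subtype.val this
        · rintro rfl; exact hvy
      rw [hNv, Finset.sum_singleton, hfval v y.1 hvy, if_pos hK2v]
    · -- odd cycle component
      obtain ⟨φ⟩ := hr
      have hK2v : ¬ K2 v := by
        rintro ⟨ψ⟩
        have h1 : Fintype.card ↥c.supp = 2 := by
          rw [Fintype.card_congr ψ.toEquiv]; simp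
        have h2 : Fintype.card ↥c.supp = 2 * t + 1 := by
          rw [Fintype.card_congr φ.toEquiv]; simp
        omega
      set x : ↥c.supp := ⟨v, hv⟩ with hx
      obtain ⟨a, b, hab, hnbr⟩ := cyc_nbr (show 3 ≤ 2 * t + 1 by omega) (φ x)
      have hadj_iff : ∀ u : ↥c.supp, (SimpleGraph.cycleGraph (2 * t + 1)).Adj (φ x) (φ u)
          ↔ (H.induce c.supp).Adj x u := fun u => φ.map_adj_iff
      have hva : H.Adj v (φ.symm a).1 := by
        rw [show ((φ.symm a).1 : V) = ((φ.symm a : ↥c.supp) : V) from rfl]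
        have : (SimpleGraph.cycleGraph (2 * t + 1)).Adj (φ x) a := by
          have : a ∈ (SimpleGraph.cycleGraph (2 * t + 1)).neighborSet (φ x) := by
            rw [hnbr]; exact Set.mem_insert a {b}
          exact this
        have := (hadj_iff (φ.symm a)).mp (by rwa [RelIso.apply_symm_apply])
        exact this
      have hvb : H.Adj v (φ.symm b).1 := by
        have : (SimpleGraph.cycleGraph (2 * t + 1)).Adj (φ x) b := by
          have : b ∈ (SimpleGraph.cycleGraph (2 * t + 1)).neighborSet (φ x) := by
            rw [hnbr]; exact Set.mem_insert_of_mem a rfl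
          exact this
        have := (hadj_iff (φ.symm b)).mp (by rwa [RelIso.apply_symm_apply])
        exact this
      have hne : ((φ.symm a).1 : V) ≠ (φ.symm b).1 := by
        intro hc'
        exact hab (by simpa using φ.symm.injective (Subtype.val_injective hc'))
      have hNv : H.neighborFinset v = {(φ.symm a).1, (φ.symm b).1} := by
        ext u
        rw [H.mem_neighborFinset, Finset.mem_insert, Finset.mem_singleton]
        constructor
        · intro hu
          have husupp : u ∈ c.supp := by
            rw [SimpleGraph.ConnectedComponent.mem_supp_iff, hc,
              SimpleGraph.ConnectedComponent.connectedComponentMk_eq_of_adj hu.symm]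
          have hadjxu : (H.induce c.supp).Adj x ⟨u, husupp⟩ := hu
          have : φ ⟨u, husupp⟩ ∈ ({a, b} : Set (Fin (2 * t + 1))) := by
            rw [← hnbr]
            exact (hadj_iff ⟨u, husupp⟩).mpr hadjxu
          rcases this with h' | h'
          · left
            have : (⟨u, husupp⟩ : ↥c.supp) = φ.symm a := by
              rw [← h']; exact (RelIso.symm_apply_apply φ _).symm
            exact congrArg Subtype.val this
          · right
            rw [Set.mem_singleton_iff] at h'
            have : (⟨u, husupp⟩ : ↥c.supp) = φ.symm b := by
              rw [← h']; exact (RelIso.symm_apply_apply φ _).symm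
            exact congrArg Subtype.val this
        · rintro (rfl | rfl)
          · exact hva
          · exact hvb
      rw [hNv, Finset.sum_pair hne, hfval v _ hva, hfval v _ hvb, if_neg hK2v]

open scoped Classical in
lemma perm_factor (G : SimpleGraph V) (m : Equiv.Perm V) (hma : ∀ v, G.Adj v (m v)) :
    G.HasK2OddCycleFactor := by
  have hm : ∀ v, m v ≠ v := fun v h => G.irrefl (h ▸ hma v)
  let sc : Setoid V := ⟨m.SameCycle,
    ⟨fun x => Equiv.Perm.SameCycle.refl m x, fun h => h.symm, fun h h' => h.trans h'⟩⟩
  let rep : V → V := fun v => (Quotient.mk sc v).out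
  have hrep1 : ∀ v, m.SameCycle (rep v) v := fun v => Quotient.exact ((Quotient.mk sc v).out_eq)
  have hrep2 : ∀ u v, m.SameCycle u v → rep u = rep v := fun u v h =>
    congrArg Quotient.out (Quotient.sound h)
  set C : Set V := {v | Odd (clen m v) ∨ ∃ i < clen m v, Even i ∧ (m ^ i) (rep v) = v} with hCdef
  set H : SimpleGraph V := SimpleGraph.fromEdgeSet {e | ∃ v ∈ C, e = s(v, m v)} with hHdef
  have hHadj : ∀ a b, H.Adj a b ↔ (s(a, b) ∈ {e | ∃ v ∈ C, e = s(v, m v)} ∧ a ≠ b) :=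
    fun a b => by rw [hHdef]; exact SimpleGraph.fromEdgeSet_adj _
  have hedge : ∀ a b, H.Adj a b ↔ (a ≠ b ∧ ∃ u ∈ C, s(a, b) = s(u, m u)) := by
    intro a b
    rw [hHadj a b]
    constructor
    · rintro ⟨⟨u, hu, he⟩, hne⟩; exact ⟨hne, u, hu, he⟩
    · rintro ⟨hne, u, hu, he⟩; exact ⟨⟨u, hu, he⟩, hne⟩
  have hHG : H ≤ G := by
    intro p q hpq
    obtain ⟨-, u, -, he⟩ := (hedge p q).mp hpq
    rcases Sym2.eq_iff.mp he with ⟨h1, h2⟩ | ⟨h1, h2⟩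
    · rw [h1, h2]; exact hma u
    · rw [h1, h2]; exact (hma u).symm
  have hsc1 : ∀ u, m.SameCycle u (m u) := fun u => by
    have := sameCycle_pow m u 1
    rwa [pow_one] at this
  have hadjSC : ∀ a b, H.Adj a b → m.SameCycle a b := by
    intro a b hab
    obtain ⟨-, u, -, he⟩ := (hedge a b).mp hab
    rcases Sym2.eq_iff.mp he with ⟨h1, h2⟩ | ⟨h1, h2⟩
    · rw [h1, h2]; exact hsc1 u
    · rw [h1, h2]; exact (hsc1 u).symm
  have hreachSC : ∀ a b, H.Reachable a b → m.SameCycle a b := fun a b h =>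
    reachable_closed (P := fun w => m.SameCycle a w)
      (fun p q hpq hp => hp.trans (hadjSC p q hpq)) h Equiv.Perm.SameCycle.rfl
  refine ⟨H, hHG, fun c => ?_⟩
  obtain ⟨v0, hv0⟩ := c.exists_rep
  have hv0' : H.connectedComponentMk v0 = c := hv0
  set r := rep v0 with hrdef
  set k := clen m r with hkdef
  have hrv0 : m.SameCycle r v0 := hrep1 v0
  have hk2 : 2 ≤ k := clen_two_le hm r
  have hrepr : ∀ w, m.SameCycle r w → rep w = r := by
    intro w hw
    rw [hrep2 w v0 (hw.symm.trans hrv0), hrdef]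
  have hclen : ∀ w, m.SameCycle r w → clen m w = k := fun w hw =>
    (clen_eq_of_sameCycle hw).symm
  have hpowmod : ∀ n, (m ^ n) r = (m ^ (n % k)) r := fun n => (pow_mod_clen m r n).symm
  have hpowinj : ∀ {i j}, i < k → j < k → (m ^ i) r = (m ^ j) r → i = j :=
    fun hi hj hij => pow_clen_inj hm r hi hj hij
  have hpowsucc : ∀ n, (m ^ (n + 1)) r = m ((m ^ n) r) := fun n => by
    rw [pow_succ']; rfl
  have hsuppmem : ∀ w, w ∈ c.supp ↔ H.Reachable w v0 := by
    intro w
    rw [SimpleGraph.ConnectedComponent.mem_supp_iff, ← hv0',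
      SimpleGraph.ConnectedComponent.eq]
  by_cases hodd : Odd k
  · -- odd cycle case
    have hCall : ∀ w, m.SameCycle r w → w ∈ C :=
      fun w hw => Or.inl (by rw [hclen w hw]; exact hodd)
    have hAdjsucc : ∀ n, H.Adj ((m ^ n) r) ((m ^ (n + 1)) r) := by
      intro n
      rw [hedge, hpowsucc n]
      exact ⟨fun h => hm _ h.symm, (m ^ n) r, hCall _ (sameCycle_pow m r n), rfl⟩
    have hreachpow : ∀ n, H.Reachable r ((m ^ n) r) := by
      intro n
      induction n with
      | zero => rw [pow_zero]; exact SimpleGraph.Reachable.refl r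
      | succ n ih => exact ih.trans (hAdjsucc n).reachable
    have hsupp : c.supp = {w | m.SameCycle r w} := by
      ext w
      rw [hsuppmem]
      constructor
      · intro hw
        exact (((hreachSC w v0 hw).trans hrv0.symm)).symm
      · intro hw
        obtain ⟨i, hik, hi⟩ := exists_pow_lt_clen hm hw
        obtain ⟨j, hjk, hj⟩ := exists_pow_lt_clen hm hrv0
        have h1 : H.Reachable r w := by rw [← hi]; exact hreachpow i
        have h2 : H.Reachable r v0 := by rw [← hj]; exact hreachpow j
        exact h1.symm.trans h2
    have hAdjchar : ∀ i j : ℕ, i < k → j < k →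
        (H.Adj ((m ^ i) r) ((m ^ j) r) ↔ (j = (i + 1) % k ∨ i = (j + 1) % k)) := by
      intro i j hik hjk
      constructor
      · intro hadj
        obtain ⟨hne, u, hu, he⟩ := (hedge _ _).mp hadj
        have husc : m.SameCycle r u := by
          rcases Sym2.eq_iff.mp he with ⟨h1, h2⟩ | ⟨h1, h2⟩
          · rw [← h1]; exact sameCycle_pow m r i
          · rw [← h2]; exact sameCycle_pow m r j
        obtain ⟨p, hpk, hp⟩ := exists_pow_lt_clen hm husc
        rcases Sym2.eq_iff.mp he with ⟨h1, h2⟩ | ⟨h1, h2⟩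
        · have hip : i = p := hpowinj hik hpk (by rw [h1, hp])
          have hstep : (m ^ j) r = (m ^ ((p + 1) % k)) r := by
            rw [h2, ← hp, ← hpowsucc p, hpowmod]
          have hj2 : j = (p + 1) % k := hpowinj hjk (Nat.mod_lt _ (by omega)) hstep
          left; rw [hj2, hip]
        · have hjp : j = p := hpowinj hjk hpk (by rw [h2, hp])
          have hstep : (m ^ i) r = (m ^ ((p + 1) % k)) r := by
            rw [h1, ← hp, ← hpowsucc p, hpowmod]
          have hi2 : i = (p + 1) % k := hpowinj hik (Nat.mod_lt _ (by omega)) hstep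
          right; rw [hi2, hjp]
      · intro hij
        have hmain : ∀ a, a < k → H.Adj ((m ^ a) r) ((m ^ ((a + 1) % k)) r) := by
          intro a hak
          have := hAdjsucc a
          rwa [hpowmod (a + 1)] at this
        rcases hij with rfl | rfl
        · exact hmain i hik
        · exact (hmain j hjk).symm
    obtain ⟨t, hkt⟩ := hodd
    have ht1 : 1 ≤ t := by omega
    right
    refine ⟨t, ht1, ?_⟩
    rw [show 2 * t + 1 = k from hkt.symm]
    have hψmem : ∀ i : Fin k, (m ^ i.1) r ∈ c.supp := by
      intro i
      rw [hsupp]; exact sameCycle_pow m r i.1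
    have hbij : Function.Bijective (fun i : Fin k => (⟨(m ^ i.1) r, hψmem i⟩ : ↥c.supp)) := by
      constructor
      · intro i j hij
        exact Fin.ext (hpowinj i.2 j.2 (congrArg Subtype.val hij))
      · rintro ⟨w, hw⟩
        rw [hsupp] at hw
        obtain ⟨i, hik, hi⟩ := exists_pow_lt_clen hm hw
        exact ⟨⟨i, hik⟩, Subtype.ext hi⟩
    refine ⟨SimpleGraph.Iso.symm ⟨Equiv.ofBijective _ hbij, ?_⟩⟩
    intro i j
    have hindadj : (H.induce c.supp).Adj ⟨(m ^ i.1) r, hψmem i⟩ ⟨(m ^ j.1) r, hψmem j⟩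
        ↔ H.Adj ((m ^ i.1) r) ((m ^ j.1) r) := Iff.rfl
    show (H.induce c.supp).Adj ⟨(m ^ i.1) r, hψmem i⟩ ⟨(m ^ j.1) r, hψmem j⟩
        ↔ (SimpleGraph.cycleGraph k).Adj i j
    rw [hindadj, hAdjchar i.1 j.1 i.2 j.2, cyc_adj hk2 i j]
  · -- K2 case
    have hEk : Even k := Nat.not_odd_iff_even.mp hodd
    obtain ⟨a, hak, ha⟩ := exists_pow_lt_clen hm hrv0
    rw [← hkdef] at hak
    obtain ⟨b, hEb, hbk, hbor⟩ : ∃ b, Even b ∧ b < k ∧ (b = a ∨ b + 1 = a) := by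
      rcases Nat.even_or_odd a with hEa | hOa
      · exact ⟨a, hEa, hak, Or.inl rfl⟩
      · rw [Nat.odd_iff] at hOa
        refine ⟨a - 1, ?_, by omega, Or.inr (by omega)⟩
        rw [Nat.even_iff]
        omega
    have hb1k : b + 1 < k := by
      rw [Nat.even_iff] at hEk hEb
      omega
    set x := (m ^ b) r with hxdef
    set y := (m ^ (b + 1)) r with hydef
    have hscx : m.SameCycle r x := sameCycle_pow m r b
    have hscy : m.SameCycle r y := sameCycle_pow m r (b + 1)
    have hyx : y = m x := hpowsucc b
    have hxC : x ∈ C := by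
      refine Or.inr ⟨b, ?_, hEb, ?_⟩
      · rw [hclen x hscx]; exact hbk
      · rw [hrepr x hscx]
    have hxy : x ≠ y := fun h => by
      rw [hyx] at h
      exact hm x h.symm
    have hadjxy : H.Adj x y := by
      rw [hedge]
      exact ⟨hxy, x, hxC, by rw [hyx]⟩
    have hux : ∀ w, H.Adj x w → w = y := by
      intro w hw
      obtain ⟨hne, u, hu, he⟩ := (hedge _ _).mp hw
      rcases Sym2.eq_iff.mp he with ⟨h1, h2⟩ | ⟨h1, h2⟩
      · rw [h2, ← h1, ← hyx]
      · exfalso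
        have husc : m.SameCycle r u := hscx.trans (by rw [h1]; exact (hsc1 u).symm)
        obtain ⟨p, hpk, hp⟩ := exists_pow_lt_clen hm husc
        have hstep : (m ^ ((p + 1) % k)) r = x := by
          rw [← hpowmod, hpowsucc, hp, ← h1]
        have hpb : (p + 1) % k = b :=
          hpowinj (Nat.mod_lt (p + 1) (show 0 < k by omega)) hbk (hstep.trans hxdef)
        rcases hu with hoddu | ⟨i, hik, hEi, hiu⟩
        · rw [hclen u husc] at hoddu; exact hodd hoddu
        · rw [hrepr u husc] at hiu
          rw [hclen u husc] at hik
          have hip : i = p := hpowinj hik hpk (by rw [hiu, hp])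
          rw [Nat.even_iff] at hEi hEb hEk
          rcases Nat.lt_or_ge (p + 1) k with hlt | hge
          · rw [Nat.mod_eq_of_lt hlt] at hpb; omega
          · have hpk1 : p + 1 = k := by omega
            rw [hpk1, Nat.mod_self] at hpb; omega
    have huy : ∀ w, H.Adj y w → w = x := by
      intro w hw
      obtain ⟨hne, u, hu, he⟩ := (hedge _ _).mp hw
      rcases Sym2.eq_iff.mp he with ⟨h1, h2⟩ | ⟨h1, h2⟩
      · exfalso
        have husc : m.SameCycle r u := by rw [← h1]; exact hscy
        rcases hu with hoddu | ⟨i, hik, hEi, hiu⟩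
        · rw [hclen u husc] at hoddu; exact hodd hoddu
        · rw [hrepr u husc] at hiu
          rw [hclen u husc] at hik
          have hip : i = b + 1 := hpowinj hik hb1k (by rw [hiu, ← h1])
          rw [Nat.even_iff] at hEi hEb
          omega
      · have hux2 : u = x := m.injective (by rw [← hyx, ← h1])
        rw [h2, hux2]
    have hxv0 : H.Reachable x v0 := by
      rcases hbor with hb1 | hb2
      · have : x = v0 := by rw [hxdef, hb1, ha]
        rw [this]
      · have : y = v0 := by rw [hydef, hb2, ha]
        rw [← this]
        exact hadjxy.reachable
    have hsupp2 : c.supp = {x, y} := by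
      ext w
      rw [hsuppmem]
      constructor
      · intro hw
        have hxw : H.Reachable x w := hxv0.trans hw.symm
        refine reachable_closed (P := fun z => z ∈ ({x, y} : Set V)) ?_ hxw (Or.inl rfl)
        intro p q hpq hp
        rcases hp with rfl | hp'
        · exact Or.inr (hux q hpq)
        · obtain rfl : p = y := hp'
          exact Or.inl (huy q hpq)
      · rintro (rfl | hw')
        · exact hxv0
        · obtain rfl : w = y := hw'
          exact (hadjxy.reachable).symm.trans hxv0
    left
    rw [hsupp2]
    exact iso_K2 H hxy hadjxy

end TutteAux

/-- (Tutte) For a finite connected graph `G` the following are equivalent: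
(1) `G` has a perfect `2`-matching;
(2) `i(G - S) ≤ |S|` for every subset `S` of `V(G)`;
(3) `G` has a `{K₂, C_{2t+1} | t ≥ 1}`-factor. -/
theorem tutte_two_matching_tfae {V : Type*} [Fintype V]
    (G : SimpleGraph V) (hconn : G.Connected) :
    List.TFAE [(∃ f, G.IsPerfectTwoMatching f),
      (∀ S : Set V, G.isoCount S ≤ S.ncard),
      G.HasK2OddCycleFactor] := by
  classical
  tfae_have 1 → 2 := by
    rintro ⟨f, hf⟩ S
    exact TutteAux.one_two G f hf S
  tfae_have 2 → 3 := by
    intro h2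
    obtain ⟨m, hm⟩ := TutteAux.exists_perm G h2
    exact TutteAux.perm_factor G m hm
  tfae_have 3 → 1 := TutteAux.three_one G
  tfae_finish
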